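/- arXiv:1403.3855 — 2 statements merged into one kernel-verified Lean document; each statement's English description precedes it below -/
import Mathlib

section
/- Let μ₁, μ₂ be probability measures on ℤ, let w(x,x+1), w(x+1,x) ∈ (0,∞) be weights on the nearest-neighbour directed edges of ℤ, and let c(x,y) be the geodesic cost: the infimum over directed nearest-neighbour paths from x to y of the sum of the edge weights. Then inf_ρ E_ρ(c) = ∑_{x∈ℤ} ( w(x,x+1)[F₁(x) − F₂(x)]₊ + w(x+1,x)[F₂(x) − F₁(x)]₊ ), where the infimum is over all couplings ρ of μ₁ and μ₂, F_i(x) = ∑_{z ≤ x} μ_i(z), and [a]₊ = max{a,0}. In particular, when w(x,x+1) = w(x+1,x) = w({x,x+1}) the right-hand side equals ∑_x w({x,x+1}) |F₁(x) − F₂(x)|, and when all weights equal 1 (cost c(x,y) = |x−y|) it equals ∑_x |F₁(x) − F₂(x)|. -/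
open scoped BigOperators

variable {V : Type*}

/-- A directed path in the digraph `(V, E)`: a nonempty list of vertices whose
consecutive pairs are directed edges. -/
def IsDipath (E : Set (V × V)) (l : List V) : Prop :=
  l ≠ [] ∧ l.Chain' (fun a b => (a, b) ∈ E)

/-- The list of directed edges of a path. -/
def pathEdges (l : List V) : List (V × V) := l.zip l.tail

/-- The unit flow `Q_γ` along a path: `1` on the edges of the path and `0` elsewhere. -/
noncomputable def pathFlow (l : List V) : V × V → ℝ :=
  Set.indicator {e | e ∈ pathEdges l} 1

/-- A flow on the digraph `(V, E)`: nonnegative and supported on `E`. -/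
def IsFlow (E : Set (V × V)) (Q : V × V → ℝ) : Prop :=
  (∀ e, 0 ≤ Q e) ∧ ∀ e, e ∉ E → Q e = 0

/-- The divergence of a flow at a vertex. -/
noncomputable def divergence (Q : V × V → ℝ) (x : V) : ℝ :=
  (∑' y, Q (x, y)) - ∑' y, Q (y, x)

/-- A relation is acyclic if it has no directed cycles. -/
def AcyclicRel (r : V → V → Prop) : Prop := ∀ x, ¬ Relation.TransGen r x x

/-- The edge relation of a digraph. -/
def edgeRel (E : Set (V × V)) : V → V → Prop := fun a b => (a, b) ∈ E

/-- The partial order induced by an acyclic digraph: `x ≤ y` iff `x = y` or there is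
a directed path from `x` to `y`. -/
def inducedLE (E : Set (V × V)) : V → V → Prop :=
  Relation.ReflTransGen (edgeRel E)

/-- A finitely decomposable flow: a pointwise sum `∑ₙ qₙ Q_{γₙ}` over finite
self-avoiding directed paths with summable nonnegative weights. -/
def FinDecomposable (E : Set (V × V)) (Q : V × V → ℝ) : Prop :=
  ∃ (γ : ℕ → List V) (q : ℕ → ℝ),
    (∀ n, IsDipath E (γ n)) ∧ (∀ n, (γ n).Nodup) ∧ (∀ n, 0 ≤ q n) ∧ Summable q ∧
    ∀ e, Q e = ∑' n, q n * pathFlow (γ n) e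

/-- A probability measure on a countable set, as a nonnegative function of total sum `1`. -/
def IsProb (μ : V → ℝ) : Prop := (∀ x, 0 ≤ μ x) ∧ HasSum μ 1

/-- A coupling of `μ₁` and `μ₂`: a probability on `V × V` with the given marginals. -/
def IsCoupling (μ₁ μ₂ : V → ℝ) (ρ : V × V → ℝ) : Prop :=
  (∀ p, 0 ≤ ρ p) ∧ (∀ x, HasSum (fun y => ρ (x, y)) (μ₁ x)) ∧
    ∀ y, HasSum (fun x => ρ (x, y)) (μ₂ y)

/-- Stochastic domination: `∑ f μ₁ ≤ ∑ f μ₂` for every bounded increasing `f`. -/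
def StochDom (le : V → V → Prop) (μ₁ μ₂ : V → ℝ) : Prop :=
  ∀ f : V → ℝ, (∃ C, ∀ x, |f x| ≤ C) → (∀ x y, le x y → f x ≤ f y) →
    ∑' x, f x * μ₁ x ≤ ∑' x, f x * μ₂ x

/-- Finite-case divergence. -/
noncomputable def divergenceF [Fintype V] (Q : V × V → ℝ) (x : V) : ℝ :=
  (∑ y, Q (x, y)) - ∑ y, Q (y, x)

/-- Probability measure on a finite set. -/
def IsProbF [Fintype V] (μ : V → ℝ) : Prop := (∀ x, 0 ≤ μ x) ∧ ∑ x, μ x = 1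

/-- Coupling on a finite set. -/
def IsCouplingF [Fintype V] (μ₁ μ₂ : V → ℝ) (ρ : V × V → ℝ) : Prop :=
  (∀ p, 0 ≤ ρ p) ∧ (∀ x, ∑ y, ρ (x, y) = μ₁ x) ∧ ∀ y, ∑ x, ρ (x, y) = μ₂ y

/-- Stochastic domination on a finite set. -/
def StochDomF [Fintype V] (le : V → V → Prop) (μ₁ μ₂ : V → ℝ) : Prop :=
  ∀ f : V → ℝ, (∀ x y, le x y → f x ≤ f y) → ∑ x, f x * μ₁ x ≤ ∑ x, f x * μ₂ x

/-- The cost of a path: the sum of the weights of its edges. -/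
noncomputable def pathCost (w : V × V → ℝ) (l : List V) : ℝ := ((pathEdges l).map w).sum

/-- The geodesic cost associated to a weight function on a digraph. -/
noncomputable def geoCost (E : Set (V × V)) (w : V × V → ℝ) (x y : V) : ℝ :=
  sInf {r | ∃ l, IsDipath E l ∧ l.head? = some x ∧ l.getLast? = some y ∧ pathCost w l = r}


/-- The distribution function of a measure on `ℤ`. -/
noncomputable def distFun (μ : ℤ → ℝ) (x : ℤ) : ℝ :=
  ∑' z, Set.indicator {z : ℤ | z ≤ x} μ z

/-- The nearest-neighbour digraph on `ℤ`. -/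
def Ez : Set (ℤ × ℤ) := {p | p.2 = p.1 + 1 ∨ p.1 = p.2 + 1}

/-- The weight function on the nearest-neighbour digraph determined by the upward weights
`wp x = w(x, x+1)` and downward weights `wm x = w(x+1, x)`. -/
noncomputable def wz (wp wm : ℤ → ℝ) : ℤ × ℤ → ℝ :=
  fun p => if p.2 = p.1 + 1 then wp p.1 else wm p.2

/-- The optimal transport cost between `μ₁` and `μ₂` for the cost `c`. -/
noncomputable def MKcost (c : ℤ → ℤ → ℝ) (μ₁ μ₂ : ℤ → ℝ) : ENNReal :=
  ⨅ ρ ∈ {ρ : ℤ × ℤ → ℝ | IsCoupling μ₁ μ₂ ρ},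
    ∑' p : ℤ × ℤ, ENNReal.ofReal (c p.1 p.2 * ρ p)


noncomputable def Dz (wp wm : ℤ → ℝ) (x y : ℤ) : ℝ :=
  (∑ z ∈ Finset.Ico x y, wp z) + ∑ z ∈ Finset.Ico y x, wm z

lemma IcoZ_insert_left {a b : ℤ} (h : a < b) :
    Finset.Ico a b = insert a (Finset.Ico (a+1) b) := by
  ext z; simp only [Finset.mem_Ico, Finset.mem_insert]; omega

lemma IcoZ_insert_right {a b : ℤ} (h : a < b) :
    Finset.Ico a b = insert (b-1) (Finset.Ico a (b-1)) := by
  ext z; simp only [Finset.mem_Ico, Finset.mem_insert]; omega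

lemma IcoZ_empty {a b : ℤ} (h : b ≤ a) : Finset.Ico a b = (∅ : Finset ℤ) := by
  rw [Finset.Ico_eq_empty_iff]; omega

section stepA
variable {wp wm : ℤ → ℝ}

lemma Dz_nonneg (hwp : ∀ x, 0 ≤ wp x) (hwm : ∀ x, 0 ≤ wm x) (x y : ℤ) :
    0 ≤ Dz wp wm x y :=
  add_nonneg (Finset.sum_nonneg fun z _ => hwp z) (Finset.sum_nonneg fun z _ => hwm z)

lemma Dz_self (x : ℤ) : Dz wp wm x x = 0 := by simp [Dz]


lemma Dz_step_up (hwp : ∀ x, 0 ≤ wp x) (hwm : ∀ x, 0 ≤ wm x) (x y : ℤ) :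
    Dz wp wm x y ≤ wp x + Dz wp wm (x+1) y := by
  simp only [Dz]
  rcases le_or_gt (x+1) y with h | h
  · have hA : ∑ z ∈ Finset.Ico x y, wp z = wp x + ∑ z ∈ Finset.Ico (x+1) y, wp z := by
      rw [IcoZ_insert_left (show x < y by omega), Finset.sum_insert (by simp)]
    have hB : Finset.Ico y x = (∅ : Finset ℤ) := IcoZ_empty (by omega)
    have hC : Finset.Ico y (x+1) = (∅ : Finset ℤ) := IcoZ_empty (by omega)
    rw [hB, hC]; simp [hA]
  · have hA : Finset.Ico x y = (∅ : Finset ℤ) := IcoZ_empty (by omega)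
    have hB : Finset.Ico (x+1) y = (∅ : Finset ℤ) := IcoZ_empty (by omega)
    have hC : ∑ z ∈ Finset.Ico y (x+1), wm z = wm x + ∑ z ∈ Finset.Ico y x, wm z := by
      rw [IcoZ_insert_right (show y < x+1 by omega)]
      simp only [add_sub_cancel_right]
      rw [Finset.sum_insert (by simp)]
    rw [hA, hB, hC]
    have := hwp x; have := hwm x; simp; linarith

lemma Dz_step_down (hwp : ∀ x, 0 ≤ wp x) (hwm : ∀ x, 0 ≤ wm x) (x y : ℤ) :
    Dz wp wm x y ≤ wm (x-1) + Dz wp wm (x-1) y := by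
  simp only [Dz]
  rcases le_or_gt x y with h | h
  · have hA : ∑ z ∈ Finset.Ico (x-1) y, wp z = wp (x-1) + ∑ z ∈ Finset.Ico x y, wp z := by
      rw [IcoZ_insert_left (show x-1 < y by omega)]
      rw [show x - 1 + 1 = x by ring, Finset.sum_insert (by simp)]
    have hB : Finset.Ico y x = (∅ : Finset ℤ) := IcoZ_empty (by omega)
    have hC : Finset.Ico y (x-1) = (∅ : Finset ℤ) := IcoZ_empty (by omega)
    rw [hB, hC, hA]
    have := hwp (x-1); have := hwm (x-1); simp; linarith
  · have hA : Finset.Ico x y = (∅ : Finset ℤ) := IcoZ_empty (by omega)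
    have hC : ∑ z ∈ Finset.Ico y x, wm z = wm (x-1) + ∑ z ∈ Finset.Ico y (x-1), wm z := by
      rw [IcoZ_insert_right (show y < x by omega), Finset.sum_insert (by simp)]
    rw [hA, hC]
    have hs : (0:ℝ) ≤ ∑ z ∈ Finset.Ico (x-1) y, wp z := Finset.sum_nonneg fun z _ => hwp z
    simp; linarith


lemma pathCost_cons (w : ℤ × ℤ → ℝ) (a b : ℤ) (t : List ℤ) :
    pathCost w (a :: b :: t) = w (a, b) + pathCost w (b :: t) := by
  simp [pathCost, pathEdges]

lemma cost_ge_Dz (hwp : ∀ x, 0 ≤ wp x) (hwm : ∀ x, 0 ≤ wm x) :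
    ∀ (l : List ℤ) (x y : ℤ),
    l.Chain' (fun a b => (a, b) ∈ Ez) → l.head? = some x → l.getLast? = some y →
    Dz wp wm x y ≤ pathCost (wz wp wm) l := by
  intro l
  induction l with
  | nil => intro x y _ h; simp at h
  | cons a t ih =>
    intro x y hc hh hl
    have hx : x = a := by simpa using hh.symm
    subst hx
    cases t with
    | nil =>
      have hy : y = x := by simpa using hl.symm
      subst hy
      simp [Dz_self, pathCost, pathEdges]
    | cons b t =>
      have hc1 : (x, b) ∈ Ez := (List.isChain_cons_cons.mp hc).1
      have hc2 : (b :: t).Chain' (fun a b => (a, b) ∈ Ez) := (List.isChain_cons_cons.mp hc).2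
      have hl2 : (b :: t).getLast? = some y := by
        rwa [List.getLast?_cons_cons] at hl
      have IH := ih b y hc2 rfl hl2
      rw [pathCost_cons]
      rcases hc1 with h | h
      · have h' : b = x + 1 := h
        have hw : wz wp wm (x, b) = wp x := by simp [wz, h']
        have hst := Dz_step_up hwp hwm (wp := wp) (wm := wm) x y
        rw [hw]; rw [← h'] at hst; linarith
      · have h' : x = b + 1 := h
        have hb : b = x - 1 := by omega
        have hw : wz wp wm (x, b) = wm b := by
          simp only [wz]; rw [if_neg (by omega)]
        have hst := Dz_step_down hwp hwm (wp := wp) (wm := wm) x y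
        rw [hw, hb]
        rw [hb] at IH
        linarith

end stepA

/-- direct upward path -/
def upList (x : ℤ) : ℕ → List ℤ
  | 0 => [x]
  | n+1 => x :: upList (x+1) n

def downList (x : ℤ) : ℕ → List ℤ
  | 0 => [x]
  | n+1 => x :: downList (x-1) n

lemma upList_ne_nil (x : ℤ) (n : ℕ) : upList x n ≠ [] := by
  cases n <;> simp [upList]

lemma downList_ne_nil (x : ℤ) (n : ℕ) : downList x n ≠ [] := by
  cases n <;> simp [downList]

lemma upList_head (x : ℤ) (n : ℕ) : (upList x n).head? = some x := by
  cases n <;> simp [upList]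

lemma downList_head (x : ℤ) (n : ℕ) : (downList x n).head? = some x := by
  cases n <;> simp [downList]

lemma getLast?_cons_ne {α : Type*} (a : α) (l : List α) (h : l ≠ []) :
    (a :: l).getLast? = l.getLast? := by
  cases l with
  | nil => exact absurd rfl h
  | cons b t => exact List.getLast?_cons_cons

lemma upList_last (x : ℤ) (n : ℕ) : (upList x n).getLast? = some (x + n) := by
  induction n generalizing x with
  | zero => simp [upList]
  | succ n ih =>
    rw [upList, getLast?_cons_ne _ _ (upList_ne_nil _ _), ih (x+1)]
    congr 1; push_cast; ring

lemma downList_last (x : ℤ) (n : ℕ) : (downList x n).getLast? = some (x - n) := by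
  induction n generalizing x with
  | zero => simp [downList]
  | succ n ih =>
    rw [downList, getLast?_cons_ne _ _ (downList_ne_nil _ _), ih (x-1)]
    congr 1; push_cast; ring

lemma upList_chain (x : ℤ) (n : ℕ) : (upList x n).Chain' (fun a b => (a, b) ∈ Ez) := by
  induction n generalizing x with
  | zero => simp [upList, List.Chain', List.isChain_singleton]
  | succ n ih =>
    rw [upList]
    cases n with
    | zero => simp [upList, List.Chain', List.isChain_cons_cons, Ez]
    | succ m =>
      rw [show upList (x+1) (m+1) = (x+1) :: upList (x+1+1) m from rfl, List.Chain', List.isChain_cons_cons]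
      exact ⟨Or.inl rfl, by rw [← show upList (x+1) (m+1) = (x+1) :: upList (x+1+1) m from rfl]; exact ih (x+1)⟩

lemma downList_chain (x : ℤ) (n : ℕ) : (downList x n).Chain' (fun a b => (a, b) ∈ Ez) := by
  induction n generalizing x with
  | zero => simp [downList, List.Chain', List.isChain_singleton]
  | succ n ih =>
    rw [downList]
    cases n with
    | zero => simp [downList, List.Chain', List.isChain_cons_cons, Ez]
    | succ m =>
      rw [show downList (x-1) (m+1) = (x-1) :: downList (x-1-1) m from rfl, List.Chain', List.isChain_cons_cons]
      refine ⟨Or.inr (by omega), by rw [← show downList (x-1) (m+1) = (x-1) :: downList (x-1-1) m from rfl]; exact ih (x-1)⟩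

lemma upList_cost (wp wm : ℤ → ℝ) (x : ℤ) (n : ℕ) :
    pathCost (wz wp wm) (upList x n) = ∑ z ∈ Finset.Ico x (x + n), wp z := by
  induction n generalizing x with
  | zero => simp [upList, pathCost, pathEdges]
  | succ n ih =>
    have hcons : upList x (n+1) = x :: upList (x+1) n := rfl
    have hw : wz wp wm (x, x+1) = wp x := by simp [wz]
    have hsum : Finset.Ico x (x + ((n:ℤ)+1)) = insert x (Finset.Ico (x+1) (x+1+(n:ℤ))) := by
      rw [IcoZ_insert_left (by omega)]; congr 1; ring
    cases n with
    | zero => simp [upList, pathCost, pathEdges, hw, IcoZ_insert_left (show x < x + (1:ℤ) by omega), IcoZ_empty (le_refl (x+1))]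
    | succ m =>
      rw [hcons, show upList (x+1) (m+1) = (x+1) :: upList (x+1+1) m from rfl, pathCost_cons,
        ← show upList (x+1) (m+1) = (x+1) :: upList (x+1+1) m from rfl, ih (x+1), hw]
      push_cast
      rw [show x + ((m:ℤ) + 1 + 1) = x + ((m:ℤ)+1+1) from rfl]
      rw [IcoZ_insert_left (show x < x + ((m:ℤ)+1+1) by omega), Finset.sum_insert (by simp)]
      congr 2
      ring

lemma downList_cost (wp wm : ℤ → ℝ) (x : ℤ) (n : ℕ) :
    pathCost (wz wp wm) (downList x n) = ∑ z ∈ Finset.Ico (x - n) x, wm z := by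
  induction n generalizing x with
  | zero => simp [downList, pathCost, pathEdges]
  | succ n ih =>
    have hcons : downList x (n+1) = x :: downList (x-1) n := rfl
    have hw : wz wp wm (x, x-1) = wm (x-1) := by
      simp only [wz]; rw [if_neg (by omega)]
    cases n with
    | zero =>
      simp [downList, pathCost, pathEdges, hw, IcoZ_insert_right (show x - (1:ℤ) < x by omega), IcoZ_empty (le_refl (x-1))]
    | succ m =>
      rw [hcons, show downList (x-1) (m+1) = (x-1) :: downList (x-1-1) m from rfl, pathCost_cons,
        ← show downList (x-1) (m+1) = (x-1) :: downList (x-1-1) m from rfl, ih (x-1), hw]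
      push_cast
      rw [IcoZ_insert_right (show x - ((m:ℤ)+1+1) < x by omega), Finset.sum_insert (by simp)]
      congr 2 <;> ring

lemma geoCost_eq_Dz {wp wm : ℤ → ℝ} (hwp : ∀ x, 0 ≤ wp x) (hwm : ∀ x, 0 ≤ wm x) (x y : ℤ) :
    geoCost Ez (wz wp wm) x y = Dz wp wm x y := by
  have hmem : Dz wp wm x y ∈
      {r | ∃ l, IsDipath Ez l ∧ l.head? = some x ∧ l.getLast? = some y ∧ pathCost (wz wp wm) l = r} := by
    rcases le_or_gt x y with h | h
    · refine ⟨upList x (y - x).toNat, ⟨upList_ne_nil _ _, upList_chain _ _⟩,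
        upList_head _ _, ?_, ?_⟩
      · rw [upList_last]; congr 1; omega
      · rw [upList_cost]
        have he : x + ((y - x).toNat : ℤ) = y := by omega
        rw [he, Dz, IcoZ_empty h, Finset.sum_empty, add_zero]
    · refine ⟨downList x (x - y).toNat, ⟨downList_ne_nil _ _, downList_chain _ _⟩,
        downList_head _ _, ?_, ?_⟩
      · rw [downList_last]; congr 1; omega
      · rw [downList_cost]
        have he : x - ((x - y).toNat : ℤ) = y := by omega
        rw [he, Dz, IcoZ_empty (le_of_lt h), Finset.sum_empty, zero_add]
  have hlb : ∀ r ∈ {r | ∃ l, IsDipath Ez l ∧ l.head? = some x ∧ l.getLast? = some y ∧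
      pathCost (wz wp wm) l = r}, Dz wp wm x y ≤ r := by
    rintro r ⟨l, ⟨_, hch⟩, hh, hl, rfl⟩
    exact cost_ge_Dz hwp hwm l x y hch hh hl
  exact le_antisymm (csInf_le ⟨_, hlb⟩ hmem) (le_csInf ⟨_, hmem⟩ hlb)
section distFunLemmas
variable {μ : ℤ → ℝ}

lemma summable_ind (hsum : Summable μ) (s : Set ℤ) : Summable (s.indicator μ) :=
  hsum.indicator s

lemma distFun_nonneg (hμ0 : ∀ x, 0 ≤ μ x) (x : ℤ) : 0 ≤ distFun μ x :=
  tsum_nonneg fun z => Set.indicator_apply_nonneg fun _ => hμ0 z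

lemma distFun_le_one (hμ0 : ∀ x, 0 ≤ μ x) (hsum : HasSum μ 1) (x : ℤ) :
    distFun μ x ≤ 1 := by
  have h1 : ∑' z, μ z = 1 := hsum.tsum_eq
  rw [distFun, ← h1]
  refine Summable.tsum_le_tsum (fun z => ?_) (hsum.summable.indicator _) hsum.summable
  by_cases h : z ∈ {z : ℤ | z ≤ x}
  · rw [Set.indicator_of_mem h]
  · rw [Set.indicator_of_notMem h]; exact hμ0 z

lemma distFun_succ (hsum : Summable μ) (x : ℤ) :
    distFun μ x = distFun μ (x-1) + μ x := by
  have hfun : Set.indicator {z : ℤ | z ≤ x} μ =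
      fun z => Set.indicator {z : ℤ | z ≤ x-1} μ z + Set.indicator {x} μ z := by
    funext z
    by_cases h1 : z ≤ x - 1
    · rw [Set.indicator_of_mem (show z ∈ {z : ℤ | z ≤ x} by simp; omega),
        Set.indicator_of_mem (show z ∈ {z : ℤ | z ≤ x-1} by simp; omega),
        Set.indicator_of_notMem (show z ∉ ({x} : Set ℤ) by simp; omega)]
      ring
    · by_cases h2 : z = x
      · subst h2
        rw [Set.indicator_of_mem (show z ∈ {w : ℤ | w ≤ z} by simp),
          Set.indicator_of_notMem (show z ∉ {w : ℤ | w ≤ z-1} by simp),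
          Set.indicator_of_mem (show z ∈ ({z} : Set ℤ) by simp)]
        ring
      · rw [Set.indicator_of_notMem (show z ∉ {z' : ℤ | z' ≤ x} by simp; omega),
          Set.indicator_of_notMem (show z ∉ {z' : ℤ | z' ≤ x-1} by simp; omega),
          Set.indicator_of_notMem (show z ∉ ({x} : Set ℤ) by simpa)]
        ring
    
  rw [distFun, distFun, hfun,
    Summable.tsum_add (hsum.indicator _) (hsum.indicator _)]
  congr 1
  have : ∀ z : ℤ, Set.indicator ({x} : Set ℤ) μ z = if z = x then μ x else 0 := by
    intro z
    by_cases h : z = x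
    · subst h; rw [Set.indicator_of_mem (by simp)]; simp
    · rw [Set.indicator_of_notMem (by simpa)]; simp [h]
  rw [tsum_congr this, tsum_ite_eq]

lemma distFun_mono (hμ0 : ∀ x, 0 ≤ μ x) (hsum : Summable μ) :
    Monotone (distFun μ) := by
  refine monotone_int_of_le_succ fun n => ?_
  have := distFun_succ hsum (n+1)
  simp only [add_sub_cancel_right] at this
  rw [this]
  linarith [hμ0 (n+1)]

lemma distFun_tail_hi (hμ0 : ∀ x, 0 ≤ μ x) (hsum : HasSum μ 1) {ε : ℝ} (hε : 0 < ε) :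
    ∃ M : ℤ, 1 - ε < distFun μ M := by
  obtain ⟨s, hs⟩ := (hsum.eventually (eventually_gt_nhds (show 1 - ε < 1 by linarith))).exists
  obtain ⟨M, hM⟩ := (s : Set ℤ).toFinite.bddAbove
  refine ⟨M, lt_of_lt_of_le hs ?_⟩
  rw [distFun]
  have := Summable.sum_le_tsum (f := Set.indicator {z : ℤ | z ≤ M} μ) s
    (fun i _ => Set.indicator_apply_nonneg fun _ => hμ0 i) (hsum.summable.indicator _)
  refine le_trans (le_of_eq ?_) this
  refine Finset.sum_congr rfl fun z hz => ?_
  rw [Set.indicator_of_mem (show z ∈ {z : ℤ | z ≤ M} from hM (by simpa using hz))]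

lemma distFun_tail_lo (hμ0 : ∀ x, 0 ≤ μ x) (hsum : HasSum μ 1) {ε : ℝ} (hε : 0 < ε) :
    ∃ m : ℤ, distFun μ m < ε := by
  obtain ⟨s, hs⟩ := (hsum.eventually (eventually_gt_nhds (show 1 - ε < 1 by linarith))).exists
  obtain ⟨m0, hm0⟩ := (s : Set ℤ).toFinite.bddBelow
  refine ⟨m0 - 1, ?_⟩
  have hsplit : (1:ℝ) = distFun μ (m0-1) + ∑' z, Set.indicator {z : ℤ | m0 ≤ z} μ z := by
    rw [distFun, ← Summable.tsum_add (hsum.summable.indicator _) (hsum.summable.indicator _),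
      ← hsum.tsum_eq]
    refine tsum_congr fun z => ?_
    by_cases h : z ≤ m0 - 1
    · rw [Set.indicator_of_mem (by simp; omega), Set.indicator_of_notMem (by simp; omega)]; ring
    · rw [Set.indicator_of_notMem (show z ∉ {w : ℤ | w ≤ m0-1} by simp; omega),
        Set.indicator_of_mem (show z ∈ {w : ℤ | m0 ≤ w} by simp; omega)]; ring
  have h2 : ∑ z ∈ s, μ z ≤ ∑' z, Set.indicator {z : ℤ | m0 ≤ z} μ z := by
    have := Summable.sum_le_tsum (f := Set.indicator {z : ℤ | m0 ≤ z} μ) s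
      (fun i _ => Set.indicator_apply_nonneg fun _ => hμ0 i) (hsum.summable.indicator _)
    refine le_trans (le_of_eq ?_) this
    refine Finset.sum_congr rfl fun z hz => ?_
    rw [Set.indicator_of_mem (show z ∈ {z : ℤ | m0 ≤ z} from hm0 (by simpa using hz))]
  linarith

lemma ofReal_distFun (hμ0 : ∀ x, 0 ≤ μ x) (hsum : Summable μ) (x : ℤ) :
    ENNReal.ofReal (distFun μ x) = ∑' z, if z ≤ x then ENNReal.ofReal (μ z) else 0 := by
  rw [distFun, ENNReal.ofReal_tsum_of_nonneg
    (fun z => Set.indicator_apply_nonneg fun _ => hμ0 z) (hsum.indicator _)]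
  refine tsum_congr fun z => ?_
  by_cases h : z ≤ x
  · rw [Set.indicator_of_mem (by simpa), if_pos h]
  · rw [Set.indicator_of_notMem (show z ∉ {w : ℤ | w ≤ x} by simp; omega), if_neg h]; simp

end distFunLemmas
noncomputable def Az (r : ℤ → ℤ → ENNReal) (z : ℤ) : ENNReal :=
  ∑' (x : ℤ) (y : ℤ), if x ≤ z ∧ z+1 ≤ y then r x y else 0

lemma ofReal_Dz {wp wm : ℤ → ℝ} (hwp : ∀ x, 0 ≤ wp x) (hwm : ∀ x, 0 ≤ wm x) (x y : ℤ) :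
    ENNReal.ofReal (Dz wp wm x y) =
      ∑' z, ((if x ≤ z ∧ z+1 ≤ y then ENNReal.ofReal (wp z) else 0) +
        (if y ≤ z ∧ z+1 ≤ x then ENNReal.ofReal (wm z) else 0)) := by
  rw [Dz, ENNReal.ofReal_add (Finset.sum_nonneg fun z _ => hwp z)
    (Finset.sum_nonneg fun z _ => hwm z),
    ENNReal.ofReal_sum_of_nonneg (fun z _ => hwp z),
    ENNReal.ofReal_sum_of_nonneg (fun z _ => hwm z), ENNReal.tsum_add]
  congr 1
  · rw [tsum_eq_sum (s := Finset.Ico x y) (fun b hb => by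
      rw [if_neg]; simp only [Finset.mem_Ico] at hb; omega)]
    exact (Finset.sum_congr rfl fun z hz => by
      rw [if_pos]; simp only [Finset.mem_Ico] at hz; omega).symm
  · rw [tsum_eq_sum (s := Finset.Ico y x) (fun b hb => by
      rw [if_neg]; simp only [Finset.mem_Ico] at hb; omega)]
    exact (Finset.sum_congr rfl fun z hz => by
      rw [if_pos]; simp only [Finset.mem_Ico] at hz; omega).symm

lemma cost_eq {wp wm : ℤ → ℝ} (hwp : ∀ x, 0 ≤ wp x) (hwm : ∀ x, 0 ≤ wm x)
    (ρ : ℤ × ℤ → ℝ) (hρ0 : ∀ p, 0 ≤ ρ p) :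
    ∑' p : ℤ × ℤ, ENNReal.ofReal (Dz wp wm p.1 p.2 * ρ p) =
      ∑' z, (ENNReal.ofReal (wp z) * Az (fun x y => ENNReal.ofReal (ρ (x, y))) z +
        ENNReal.ofReal (wm z) * Az (fun x y => ENNReal.ofReal (ρ (y, x))) z) := by
  rw [ENNReal.tsum_prod']
  have hterm : ∀ x y : ℤ, ENNReal.ofReal (Dz wp wm x y * ρ (x, y)) =
      ∑' z, ((ENNReal.ofReal (wp z)) * (if x ≤ z ∧ z+1 ≤ y then ENNReal.ofReal (ρ (x,y)) else 0) +
        (ENNReal.ofReal (wm z)) * (if y ≤ z ∧ z+1 ≤ x then ENNReal.ofReal (ρ (x,y)) else 0)) := by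
    intro x y
    rw [ENNReal.ofReal_mul (Dz_nonneg hwp hwm x y), ofReal_Dz hwp hwm,
      ← ENNReal.tsum_mul_right]
    refine tsum_congr fun z => ?_
    rw [add_mul]
    congr 1 <;> (split_ifs <;> simp)
  calc ∑' (x : ℤ) (y : ℤ), ENNReal.ofReal (Dz wp wm x y * ρ (x, y))
      = ∑' (x : ℤ) (y : ℤ) (z : ℤ),
        ((ENNReal.ofReal (wp z)) * (if x ≤ z ∧ z+1 ≤ y then ENNReal.ofReal (ρ (x,y)) else 0) +
         (ENNReal.ofReal (wm z)) * (if y ≤ z ∧ z+1 ≤ x then ENNReal.ofReal (ρ (x,y)) else 0)) := by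
        exact tsum_congr fun x => tsum_congr fun y => hterm x y
    _ = ∑' (z : ℤ) (x : ℤ) (y : ℤ),
        ((ENNReal.ofReal (wp z)) * (if x ≤ z ∧ z+1 ≤ y then ENNReal.ofReal (ρ (x,y)) else 0) +
         (ENNReal.ofReal (wm z)) * (if y ≤ z ∧ z+1 ≤ x then ENNReal.ofReal (ρ (x,y)) else 0)) := by
        rw [show (∑' (x : ℤ) (y : ℤ) (z : ℤ),
          ((ENNReal.ofReal (wp z)) * (if x ≤ z ∧ z+1 ≤ y then ENNReal.ofReal (ρ (x,y)) else 0) +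
           (ENNReal.ofReal (wm z)) * (if y ≤ z ∧ z+1 ≤ x then ENNReal.ofReal (ρ (x,y)) else 0))) =
          ∑' (x : ℤ) (z : ℤ) (y : ℤ),
          ((ENNReal.ofReal (wp z)) * (if x ≤ z ∧ z+1 ≤ y then ENNReal.ofReal (ρ (x,y)) else 0) +
           (ENNReal.ofReal (wm z)) * (if y ≤ z ∧ z+1 ≤ x then ENNReal.ofReal (ρ (x,y)) else 0))
          from tsum_congr fun x => ENNReal.tsum_comm]
        exact ENNReal.tsum_comm
    _ = ∑' z, (ENNReal.ofReal (wp z) * Az (fun x y => ENNReal.ofReal (ρ (x, y))) z +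
        ENNReal.ofReal (wm z) * Az (fun x y => ENNReal.ofReal (ρ (y, x))) z) := by
        refine tsum_congr fun z => ?_
        rw [Az, Az]
        calc ∑' (x : ℤ) (y : ℤ),
            ((ENNReal.ofReal (wp z)) * (if x ≤ z ∧ z+1 ≤ y then ENNReal.ofReal (ρ (x,y)) else 0) +
             (ENNReal.ofReal (wm z)) * (if y ≤ z ∧ z+1 ≤ x then ENNReal.ofReal (ρ (x,y)) else 0))
            = ∑' (x : ℤ), ((ENNReal.ofReal (wp z)) * ∑' (y : ℤ), (if x ≤ z ∧ z+1 ≤ y then ENNReal.ofReal (ρ (x,y)) else 0) +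
              (ENNReal.ofReal (wm z)) * ∑' (y : ℤ), (if y ≤ z ∧ z+1 ≤ x then ENNReal.ofReal (ρ (x,y)) else 0)) := by
              refine tsum_congr fun x => ?_
              rw [ENNReal.tsum_add, ENNReal.tsum_mul_left, ENNReal.tsum_mul_left]
          _ = (ENNReal.ofReal (wp z)) * ∑' (x : ℤ) (y : ℤ), (if x ≤ z ∧ z+1 ≤ y then ENNReal.ofReal (ρ (x,y)) else 0) +
              (ENNReal.ofReal (wm z)) * ∑' (x : ℤ) (y : ℤ), (if y ≤ z ∧ z+1 ≤ x then ENNReal.ofReal (ρ (x,y)) else 0) := by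
              rw [ENNReal.tsum_add, ENNReal.tsum_mul_left, ENNReal.tsum_mul_left]
          _ = _ := by
              congr 1
              congr 1
              exact ENNReal.tsum_comm

lemma tsum_ite_const {c : Prop} [Decidable c] (f : ℤ → ENNReal) :
    ∑' y, (if c then f y else 0) = if c then ∑' y, f y else 0 := by
  split_ifs <;> simp

lemma Az_lower {μ₁ μ₂ : ℤ → ℝ} (h₁ : IsProb μ₁) (h₂ : IsProb μ₂)
    {ρ : ℤ × ℤ → ℝ} (hρ : IsCoupling μ₁ μ₂ ρ) (z : ℤ) :
    ENNReal.ofReal (distFun μ₁ z - distFun μ₂ z) ≤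
      Az (fun x y => ENNReal.ofReal (ρ (x, y))) z := by
  set r : ℤ → ℤ → ENNReal := fun x y => ENNReal.ofReal (ρ (x, y)) with hr
  have hrow : ∀ x, ∑' y, r x y = ENNReal.ofReal (μ₁ x) := by
    intro x
    rw [← (hρ.2.1 x).tsum_eq, ENNReal.ofReal_tsum_of_nonneg (fun y => hρ.1 _) (hρ.2.1 x).summable]
  have hcol : ∀ y, ∑' x, r x y = ENNReal.ofReal (μ₂ y) := by
    intro y
    rw [← (hρ.2.2 y).tsum_eq, ENNReal.ofReal_tsum_of_nonneg (fun x => hρ.1 _) (hρ.2.2 y).summable]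
  have hF1 : ∑' (x : ℤ) (y : ℤ), (if x ≤ z then r x y else 0) =
      ENNReal.ofReal (distFun μ₁ z) := by
    rw [ofReal_distFun h₁.1 h₁.2.summable]
    refine tsum_congr fun x => ?_
    rw [tsum_ite_const, hrow]
  have hF2 : ∑' (x : ℤ) (y : ℤ), (if y ≤ z then r x y else 0) =
      ENNReal.ofReal (distFun μ₂ z) := by
    rw [ENNReal.tsum_comm, ofReal_distFun h₂.1 h₂.2.summable]
    refine tsum_congr fun y => ?_
    rw [tsum_ite_const, hcol]
  have hsplit : ∑' (x : ℤ) (y : ℤ), (if x ≤ z then r x y else 0) =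
      Az r z + ∑' (x : ℤ) (y : ℤ), (if x ≤ z ∧ y ≤ z then r x y else 0) := by
    rw [Az, ← ENNReal.tsum_add]
    refine tsum_congr fun x => ?_
    rw [← ENNReal.tsum_add]
    refine tsum_congr fun y => ?_
    by_cases h1 : x ≤ z <;> by_cases h2 : y ≤ z <;>
      simp [h1, h2, show (z+1 ≤ y) ↔ ¬ y ≤ z by omega]
  have hC : ∑' (x : ℤ) (y : ℤ), (if x ≤ z ∧ y ≤ z then r x y else 0) ≤
      ENNReal.ofReal (distFun μ₂ z) := by
    rw [← hF2]
    refine ENNReal.tsum_le_tsum fun x => ENNReal.tsum_le_tsum fun y => ?_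
    split_ifs with h1 h2 <;> first | exact le_refl _ | exact absurd h1.2 h2 | simp
  rw [ENNReal.ofReal_sub _ (distFun_nonneg h₂.1 z), ← hF1, hsplit]
  exact tsub_le_iff_right.mpr (add_le_add le_rfl hC)
lemma clamp_diff {l u a b : ℝ} (hlu : l ≤ u) (hab : a ≤ b) :
    max 0 (min u b - max l a) = max l (min u b) - max l (min u a) := by
  rcases le_total u b with h1 | h1 <;> rcases le_total u a with h2 | h2 <;>
    rcases le_total l b with h3 | h3 <;> rcases le_total l a with h4 | h4 <;>
    simp [min_def, max_def] <;> split_ifs <;> linarith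

lemma sum_Icc_tel (G : ℤ → ℝ) (m : ℤ) : ∀ M, m ≤ M →
    ∑ y ∈ Finset.Icc m M, (G y - G (y-1)) = G M - G (m-1) := by
  refine Int.le_induction ?_ ?_
  · rw [Finset.Icc_self, Finset.sum_singleton]
  · intro M hM ih
    have h : Finset.Icc m (M+1) = insert (M+1) (Finset.Icc m M) := by
      ext z; simp only [Finset.mem_Icc, Finset.mem_insert]; omega
    rw [h, Finset.sum_insert (by simp), ih]
    ring_nf

lemma sum_tel_le {G : ℤ → ℝ} (hG : Monotone G) (m M : ℤ) (h : m - 1 ≤ M)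
    (s : Finset ℤ) (hs : s ⊆ Finset.Icc m M) :
    ∑ y ∈ s, (G y - G (y-1)) ≤ G M - G (m-1) := by
  rcases le_or_gt m M with h1 | h1
  · calc ∑ y ∈ s, (G y - G (y-1)) ≤ ∑ y ∈ Finset.Icc m M, (G y - G (y-1)) := by
          refine Finset.sum_le_sum_of_subset_of_nonneg hs fun y _ _ => ?_
          have := hG (show y - 1 ≤ y by omega); linarith
      _ = G M - G (m-1) := sum_Icc_tel G m M h1
  · have hM : M = m - 1 := by omega
    have : s = ∅ := Finset.subset_empty.mp (by rwa [Finset.Icc_eq_empty_iff.mpr (by omega)] at hs)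
    subst this hM
    simp

lemma tel_le_above {G : ℤ → ℝ} (hG : Monotone G) {u : ℝ} (hu : ∀ y, G y ≤ u)
    (m : ℤ) (s : Finset ℤ) (hs : ∀ y ∈ s, m ≤ y) :
    ∑ y ∈ s, (G y - G (y-1)) ≤ u - G (m-1) := by
  rcases s.eq_empty_or_nonempty with h | h
  · subst h; simp; linarith [hu (m-1)]
  · have hmM : m - 1 ≤ s.max' h := by
      obtain ⟨a, ha⟩ := h
      have := hs a ha; have := Finset.le_max' s a ha; omega
    calc ∑ y ∈ s, (G y - G (y-1)) ≤ G (s.max' h) - G (m-1) :=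
          sum_tel_le hG m (s.max' h) hmM s
            (fun y hy => Finset.mem_Icc.mpr ⟨hs y hy, Finset.le_max' s y hy⟩)
      _ ≤ u - G (m-1) := by linarith [hu (s.max' h)]

lemma tel_le_below {G : ℤ → ℝ} (hG : Monotone G) {l : ℝ} (hl : ∀ y, l ≤ G y)
    (M : ℤ) (s : Finset ℤ) (hs : ∀ y ∈ s, y ≤ M) :
    ∑ y ∈ s, (G y - G (y-1)) ≤ G M - l := by
  rcases s.eq_empty_or_nonempty with h | h
  · subst h; simp; linarith [hl M]
  · have hmM : s.min' h - 1 ≤ M := by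
      obtain ⟨a, ha⟩ := h
      have := hs a ha; have := Finset.min'_le s a ha; omega
    calc ∑ y ∈ s, (G y - G (y-1)) ≤ G M - G (s.min' h - 1) :=
          sum_tel_le hG (s.min' h) M hmM s
            (fun y hy => Finset.mem_Icc.mpr ⟨Finset.min'_le s y hy, hs y hy⟩)
      _ ≤ G M - l := by linarith [hl (s.min' h - 1)]

lemma tel_le_bounds {G : ℤ → ℝ} (hG : Monotone G) {l u : ℝ} (hl : ∀ y, l ≤ G y)
    (hu : ∀ y, G y ≤ u) (s : Finset ℤ) :
    ∑ y ∈ s, (G y - G (y-1)) ≤ u - l := by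
  rcases s.eq_empty_or_nonempty with h | h
  · subst h; simp; linarith [hl 0, hu 0]
  · calc ∑ y ∈ s, (G y - G (y-1)) ≤ G (s.max' h) - l :=
        tel_le_below hG hl (s.max' h) s (fun y hy => Finset.le_max' s y hy)
      _ ≤ u - l := by linarith [hu (s.max' h)]
noncomputable def qc (F₁ F₂ : ℤ → ℝ) (x y : ℤ) : ℝ :=
  max 0 (min (F₁ x) (F₂ y) - max (F₁ (x-1)) (F₂ (y-1)))

lemma qc_nonneg (F₁ F₂ : ℤ → ℝ) (x y : ℤ) : 0 ≤ qc F₁ F₂ x y := le_max_left _ _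

lemma qc_symm (F₁ F₂ : ℤ → ℝ) (x y : ℤ) : qc F₁ F₂ x y = qc F₂ F₁ y x := by
  unfold qc; rw [min_comm (F₁ x), max_comm (F₁ (x-1))]

section qcTelescope
variable {F₁ F₂ : ℤ → ℝ}

/-- `qc` as a telescoping increment of the clamped function. -/
lemma qc_tel (hF₁ : Monotone F₁) (hF₂ : Monotone F₂) (x y : ℤ) :
    qc F₁ F₂ x y = (fun t => max (F₁ (x-1)) (min (F₁ x) t)) (F₂ y)
      - (fun t => max (F₁ (x-1)) (min (F₁ x) t)) (F₂ (y-1)) := by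
  exact clamp_diff (hF₁ (show x - 1 ≤ x by omega)) (hF₂ (show y - 1 ≤ y by omega))

lemma clampG_mono (hF₂ : Monotone F₂) (x : ℤ) :
    Monotone (fun y => max (F₁ (x-1)) (min (F₁ x) (F₂ y))) := fun a b hab =>
  max_le_max (le_refl _) (min_le_min (le_refl _) (hF₂ hab))

/-- Row marginal of the quantile coupling. -/
lemma qc_row_hasSum (hF₁ : Monotone F₁) (hF₂ : Monotone F₂)
    (hF₁x : F₁ x ≤ 1) (hF₁x' : 0 ≤ F₁ (x-1))
    (hF₂hi : ∀ ε : ℝ, 0 < ε → ∃ M : ℤ, 1 - ε < F₂ M)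
    (hF₂lo : ∀ ε : ℝ, 0 < ε → ∃ m : ℤ, F₂ m < ε)
    (hF₂0 : ∀ y, 0 ≤ F₂ y) :
    HasSum (fun y => qc F₁ F₂ x y) (F₁ x - F₁ (x-1)) := by
  set G : ℤ → ℝ := fun y => max (F₁ (x-1)) (min (F₁ x) (F₂ y)) with hG
  have hGmono : Monotone G := clampG_mono hF₂ x
  have hGu : ∀ y, G y ≤ F₁ x := fun y =>
    max_le (hF₁ (show x - 1 ≤ x by omega)) (min_le_left _ _)
  have hGl : ∀ y, F₁ (x-1) ≤ G y := fun y => le_max_left _ _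
  have htel : ∀ y, qc F₁ F₂ x y = G y - G (y-1) := fun y => qc_tel hF₁ hF₂ x y
  refine hasSum_of_isLUB_of_nonneg _ (fun y => qc_nonneg _ _ _ _) ⟨?_, ?_⟩
  · rintro v ⟨s, rfl⟩
    show ∑ y ∈ s, qc F₁ F₂ x y ≤ F₁ x - F₁ (x-1)
    rw [Finset.sum_congr rfl fun y _ => htel y]
    exact tel_le_bounds hGmono hGl hGu s
  · intro b hb
    refine le_of_forall_pos_le_add fun ε hε => ?_
    obtain ⟨M, hM⟩ := hF₂hi (ε/2) (by linarith)
    obtain ⟨m, hm⟩ := hF₂lo (ε/2) (by linarith)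
    set m' : ℤ := min m M with hm'
    have hm'M : m' ≤ M := min_le_right _ _
    have hF₂m' : F₂ (m'-1) < ε/2 :=
      lt_of_le_of_lt (hF₂ (show m' - 1 ≤ m by omega)) hm
    have hsum : ∑ y ∈ Finset.Icc m' M, qc F₁ F₂ x y = G M - G (m'-1) := by
      rw [Finset.sum_congr rfl fun y _ => htel y]
      exact sum_Icc_tel G m' M hm'M
    have hble : G M - G (m'-1) ≤ b := by
      rw [← hsum]
      exact hb ⟨Finset.Icc m' M, rfl⟩
    have hGM : F₁ x - ε/2 ≤ G M := by
      have h1 : F₁ x - ε/2 ≤ min (F₁ x) (F₂ M) := by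
        refine le_min (by linarith) (by linarith)
      exact le_trans h1 (le_max_right _ _)
    have hGm : G (m'-1) ≤ F₁ (x-1) + ε/2 := by
      refine max_le (by linarith) ?_
      have := min_le_right (F₁ x) (F₂ (m'-1))
      have := hF₂0 (m'-1)
      linarith
    linarith

/-- Generic upper bound on `Az` of the quantile coupling. -/
lemma Az_qc_le (hF₁ : Monotone F₁) (hF₂ : Monotone F₂) (z : ℤ) :
    Az (fun x y => ENNReal.ofReal (qc F₁ F₂ x y)) z ≤
      ENNReal.ofReal (max (F₁ z - F₂ z) 0) := by
  set H : ℤ → ℝ := fun x => max (F₂ z) (F₁ x) with hH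
  have hHmono : Monotone H := fun a b hab => max_le_max (le_refl _) (hF₁ hab)
  have hHl : ∀ x, F₂ z ≤ H x := fun x => le_max_left _ _
  -- inner bound
  have hinner : ∀ x : ℤ,
      (∑' y, if x ≤ z ∧ z+1 ≤ y then ENNReal.ofReal (qc F₁ F₂ x y) else 0) ≤
      (if x ≤ z then ENNReal.ofReal (H x - H (x-1)) else 0) := by
    intro x
    by_cases hx : x ≤ z
    · rw [if_pos hx]
      set G : ℤ → ℝ := fun y => max (F₁ (x-1)) (min (F₁ x) (F₂ y)) with hG
      have hGmono : Monotone G := clampG_mono hF₂ x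
      have hGu : ∀ y, G y ≤ F₁ x := fun y =>
        max_le (hF₁ (show x - 1 ≤ x by omega)) (min_le_left _ _)
      have hkey : F₁ x - G z = H x - H (x-1) := by
        simp only [hG, hH]
        rcases le_total (F₂ z) (F₁ (x-1)) with h1 | h1 <;>
          rcases le_total (F₂ z) (F₁ x) with h2 | h2 <;>
          have h3 := hF₁ (show x - 1 ≤ x by omega) <;>
          simp [max_def, min_def] <;> split_ifs <;> linarith
      rw [ENNReal.tsum_eq_iSup_sum]
      refine iSup_le fun s => ?_
      have heq : ∑ y ∈ s, (if x ≤ z ∧ z+1 ≤ y then ENNReal.ofReal (qc F₁ F₂ x y) else 0) =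
          ENNReal.ofReal (∑ y ∈ s.filter (fun y => z+1 ≤ y), qc F₁ F₂ x y) := by
        rw [ENNReal.ofReal_sum_of_nonneg (fun y _ => qc_nonneg _ _ _ _), Finset.sum_filter]
        refine Finset.sum_congr rfl fun y _ => ?_
        by_cases hy : z+1 ≤ y <;> simp [hx, hy]
      rw [heq]
      refine ENNReal.ofReal_le_ofReal ?_
      rw [← hkey]
      calc ∑ y ∈ s.filter (fun y => z+1 ≤ y), qc F₁ F₂ x y
          = ∑ y ∈ s.filter (fun y => z+1 ≤ y), (G y - G (y-1)) :=
            Finset.sum_congr rfl fun y _ => qc_tel hF₁ hF₂ x y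
        _ ≤ F₁ x - G ((z+1)-1) := tel_le_above hGmono hGu (z+1) _
            (fun y hy => (Finset.mem_filter.mp hy).2)
        _ = F₁ x - G z := by norm_num
    · rw [if_neg hx]
      have : ∀ y : ℤ, (if x ≤ z ∧ z+1 ≤ y then ENNReal.ofReal (qc F₁ F₂ x y) else 0) = 0 := by
        intro y; rw [if_neg (fun h => hx h.1)]
      rw [tsum_congr this]; simp
  have houter : (∑' x, if x ≤ z then ENNReal.ofReal (H x - H (x-1)) else 0) ≤
      ENNReal.ofReal (max (F₁ z - F₂ z) 0) := by
    have hmax : H z - F₂ z = max (F₁ z - F₂ z) 0 := by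
      simp only [hH]
      rcases le_total (F₂ z) (F₁ z) with h | h <;> simp [max_def] <;> split_ifs <;> linarith
    rw [ENNReal.tsum_eq_iSup_sum]
    refine iSup_le fun s => ?_
    have heq : ∑ x ∈ s, (if x ≤ z then ENNReal.ofReal (H x - H (x-1)) else 0) =
        ENNReal.ofReal (∑ x ∈ s.filter (fun x => x ≤ z), (H x - H (x-1))) := by
      rw [ENNReal.ofReal_sum_of_nonneg (fun x _ => by
        have := hHmono (show x - 1 ≤ x by omega); linarith), Finset.sum_filter]
    rw [heq, ← hmax]
    refine ENNReal.ofReal_le_ofReal ?_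
    exact tel_le_below hHmono hHl z _ (fun x hx => (Finset.mem_filter.mp hx).2)
  exact le_trans (ENNReal.tsum_le_tsum hinner) houter

end qcTelescope
lemma ofReal_max_zero (a : ℝ) : ENNReal.ofReal (max a 0) = ENNReal.ofReal a := by
  rcases le_total a 0 with h | h
  · rw [max_eq_right h, ENNReal.ofReal_of_nonpos h, ENNReal.ofReal_zero]
  · rw [max_eq_left h]

section assembly
variable {μ₁ μ₂ : ℤ → ℝ}

lemma qc_isCoupling (h₁ : IsProb μ₁) (h₂ : IsProb μ₂) :
    IsCoupling μ₁ μ₂ (fun p : ℤ × ℤ => qc (distFun μ₁) (distFun μ₂) p.1 p.2) := by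
  have hm1 : Monotone (distFun μ₁) := distFun_mono h₁.1 h₁.2.summable
  have hm2 : Monotone (distFun μ₂) := distFun_mono h₂.1 h₂.2.summable
  refine ⟨fun p => qc_nonneg _ _ _ _, fun x => ?_, fun y => ?_⟩
  · have h := qc_row_hasSum (x := x) hm1 hm2 (distFun_le_one h₁.1 h₁.2 x)
      (distFun_nonneg h₁.1 (x-1))
      (fun ε hε => distFun_tail_hi h₂.1 h₂.2 hε)
      (fun ε hε => distFun_tail_lo h₂.1 h₂.2 hε)
      (fun y => distFun_nonneg h₂.1 y)
    have he : distFun μ₁ x - distFun μ₁ (x-1) = μ₁ x := by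
      rw [distFun_succ h₁.2.summable x]; ring
    rwa [he] at h
  · have h := qc_row_hasSum (x := y) hm2 hm1 (distFun_le_one h₂.1 h₂.2 y)
      (distFun_nonneg h₂.1 (y-1))
      (fun ε hε => distFun_tail_hi h₁.1 h₁.2 hε)
      (fun ε hε => distFun_tail_lo h₁.1 h₁.2 hε)
      (fun x => distFun_nonneg h₁.1 x)
    have he : distFun μ₂ y - distFun μ₂ (y-1) = μ₂ y := by
      rw [distFun_succ h₂.2.summable y]; ring
    rw [he] at h
    have : (fun x => qc (distFun μ₁) (distFun μ₂) x y) =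
        (fun x => qc (distFun μ₂) (distFun μ₁) y x) := funext fun x => qc_symm _ _ _ _
    rw [this]
    exact h

lemma mk_main (h₁ : IsProb μ₁) (h₂ : IsProb μ₂)
    {wp wm : ℤ → ℝ} (hwp : ∀ x, 0 < wp x) (hwm : ∀ x, 0 < wm x) :
    MKcost (geoCost Ez (wz wp wm)) μ₁ μ₂ =
      ∑' x : ℤ, (ENNReal.ofReal (wp x * max (distFun μ₁ x - distFun μ₂ x) 0) +
        ENNReal.ofReal (wm x * max (distFun μ₂ x - distFun μ₁ x) 0)) := by
  have hwp' : ∀ x, 0 ≤ wp x := fun x => (hwp x).le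
  have hwm' : ∀ x, 0 ≤ wm x := fun x => (hwm x).le
  have hm1 : Monotone (distFun μ₁) := distFun_mono h₁.1 h₁.2.summable
  have hm2 : Monotone (distFun μ₂) := distFun_mono h₂.1 h₂.2.summable
  have hgc : geoCost Ez (wz wp wm) = fun x y => Dz wp wm x y :=
    funext fun x => funext fun y => geoCost_eq_Dz hwp' hwm' x y
  set F₁ := distFun μ₁
  set F₂ := distFun μ₂
  set RHS := ∑' x : ℤ, (ENNReal.ofReal (wp x * max (F₁ x - F₂ x) 0) +
        ENNReal.ofReal (wm x * max (F₂ x - F₁ x) 0)) with hRHS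
  rw [MKcost, hgc]
  refine le_antisymm ?_ ?_
  · -- upper bound via quantile coupling
    set ρ : ℤ × ℤ → ℝ := fun p => qc F₁ F₂ p.1 p.2 with hρdef
    have hρ : IsCoupling μ₁ μ₂ ρ := qc_isCoupling h₁ h₂
    refine le_trans (iInf₂_le ρ hρ) ?_
    rw [cost_eq hwp' hwm' ρ hρ.1]
    refine ENNReal.tsum_le_tsum fun z => ?_
    have hA : Az (fun x y => ENNReal.ofReal (ρ (x, y))) z ≤
        ENNReal.ofReal (max (F₁ z - F₂ z) 0) := Az_qc_le hm1 hm2 z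
    have hB : Az (fun x y => ENNReal.ofReal (ρ (y, x))) z ≤
        ENNReal.ofReal (max (F₂ z - F₁ z) 0) := by
      have : (fun x y => ENNReal.ofReal (ρ (y, x))) =
          (fun x y => ENNReal.ofReal (qc F₂ F₁ x y)) := by
        funext x y; rw [hρdef]; simp only; rw [qc_symm]
      rw [this]
      exact Az_qc_le hm2 hm1 z
    calc ENNReal.ofReal (wp z) * Az (fun x y => ENNReal.ofReal (ρ (x, y))) z +
          ENNReal.ofReal (wm z) * Az (fun x y => ENNReal.ofReal (ρ (y, x))) z
        ≤ ENNReal.ofReal (wp z) * ENNReal.ofReal (max (F₁ z - F₂ z) 0) +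
          ENNReal.ofReal (wm z) * ENNReal.ofReal (max (F₂ z - F₁ z) 0) :=
          add_le_add (mul_le_mul_right hA _) (mul_le_mul_right hB _)
      _ = ENNReal.ofReal (wp z * max (F₁ z - F₂ z) 0) +
          ENNReal.ofReal (wm z * max (F₂ z - F₁ z) 0) := by
          rw [← ENNReal.ofReal_mul (hwp' z), ← ENNReal.ofReal_mul (hwm' z)]
  · -- lower bound for any coupling
    refine le_iInf₂ fun ρ hρ => ?_
    have hρ' : IsCoupling μ₁ μ₂ ρ := hρ
    rw [cost_eq hwp' hwm' ρ hρ'.1]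
    refine ENNReal.tsum_le_tsum fun z => ?_
    have hA : ENNReal.ofReal (max (F₁ z - F₂ z) 0) ≤
        Az (fun x y => ENNReal.ofReal (ρ (x, y))) z := by
      rw [ofReal_max_zero]
      exact Az_lower h₁ h₂ hρ' z
    have hB : ENNReal.ofReal (max (F₂ z - F₁ z) 0) ≤
        Az (fun x y => ENNReal.ofReal (ρ (y, x))) z := by
      rw [ofReal_max_zero]
      have hswap : IsCoupling μ₂ μ₁ (fun p : ℤ × ℤ => ρ (p.2, p.1)) :=
        ⟨fun p => hρ'.1 _, fun x => hρ'.2.2 x, fun y => hρ'.2.1 y⟩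
      exact Az_lower h₂ h₁ hswap z
    calc ENNReal.ofReal (wp z * max (F₁ z - F₂ z) 0) +
          ENNReal.ofReal (wm z * max (F₂ z - F₁ z) 0)
        = ENNReal.ofReal (wp z) * ENNReal.ofReal (max (F₁ z - F₂ z) 0) +
          ENNReal.ofReal (wm z) * ENNReal.ofReal (max (F₂ z - F₁ z) 0) := by
          rw [← ENNReal.ofReal_mul (hwp' z), ← ENNReal.ofReal_mul (hwm' z)]
      _ ≤ _ := add_le_add (mul_le_mul_right hA _) (mul_le_mul_right hB _)

end assembly

/-- **Explicit Monge–Kantorovich cost on `ℤ` for geodesic nearest-neighbour costs.**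
With `[a]₊ = max a 0`, the optimal cost is
`∑ₓ (w(x,x+1) [F₁(x) - F₂(x)]₊ + w(x+1,x) [F₂(x) - F₁(x)]₊)`; in the symmetric case this is
`∑ₓ w({x,x+1}) |F₁(x) - F₂(x)|` and for unit weights `∑ₓ |F₁(x) - F₂(x)|`. -/
theorem one_dimensional_monge_kantorovich (μ₁ μ₂ : ℤ → ℝ)
    (h₁ : IsProb μ₁) (h₂ : IsProb μ₂)
    (wp wm : ℤ → ℝ) (hwp : ∀ x, 0 < wp x) (hwm : ∀ x, 0 < wm x) :
    MKcost (geoCost Ez (wz wp wm)) μ₁ μ₂ =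
      (∑' x : ℤ, (ENNReal.ofReal (wp x * max (distFun μ₁ x - distFun μ₂ x) 0) +
        ENNReal.ofReal (wm x * max (distFun μ₂ x - distFun μ₁ x) 0))) ∧
    ((∀ x, wp x = wm x) →
      MKcost (geoCost Ez (wz wp wm)) μ₁ μ₂ =
        ∑' x : ℤ, ENNReal.ofReal (wp x * |distFun μ₁ x - distFun μ₂ x|)) ∧
    ((∀ x, wp x = 1) → (∀ x, wm x = 1) →
      MKcost (geoCost Ez (wz wp wm)) μ₁ μ₂ =
        ∑' x : ℤ, ENNReal.ofReal |distFun μ₁ x - distFun μ₂ x|) := by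
  have hmain := mk_main h₁ h₂ hwp hwm
  refine ⟨hmain, fun hs => ?_, fun hp hm => ?_⟩
  · rw [hmain]
    refine tsum_congr fun z => ?_
    rw [← hs z, ← ENNReal.ofReal_add (mul_nonneg (hwp z).le (le_max_right _ _))
      (mul_nonneg (hwp z).le (le_max_right _ _)), ← mul_add]
    congr 1
    congr 1
    rcases le_total (distFun μ₂ z) (distFun μ₁ z) with h | h
    · rw [abs_of_nonneg (by linarith), max_eq_left (by linarith), max_eq_right (by linarith)]
      ring
    · rw [abs_of_nonpos (by linarith), max_eq_right (by linarith), max_eq_left (by linarith)]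
      ring
  · rw [hmain]
    refine tsum_congr fun z => ?_
    rw [hp z, hm z, one_mul, one_mul, ← ENNReal.ofReal_add (le_max_right _ _) (le_max_right _ _)]
    congr 1
    rcases le_total (distFun μ₂ z) (distFun μ₁ z) with h | h
    · rw [abs_of_nonneg (by linarith), max_eq_left (by linarith), max_eq_right (by linarith)]
      ring
    · rw [abs_of_nonpos (by linarith), max_eq_right (by linarith), max_eq_left (by linarith)]
      ring
end

section
/- Let V = {0,1}^N with the coordinatewise partial order and the Hamming cost c(η,η') = ∑_{i=1}^N |η(i) − η'(i)|. Let μ₁, μ₂ be probability measures on V with μ₁ ⪯ μ₂. Then every coupling ρ of μ₁ and μ₂ that is compatible with the coordinatewise order (i.e. ρ({(η,η') : η ≤ η'}) = 1) is optimal for the Monge–Kantorovich problem: E_ρ(c) = min over all couplings ρ' of μ₁ and μ₂ of E_{ρ'}(c). -/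
open scoped BigOperators

variable {V : Type*}

/-- The Hamming cost on `{0,1}^N`. -/
noncomputable def hammingCost {N : ℕ} (η η' : Fin N → Bool) : ℝ :=
  ∑ i, if η i = η' i then 0 else 1


/-- **Compatible couplings are optimal on the hypercube.** If `μ₁ ⪯ μ₂` on `{0,1}^N` and
`ρ` is a coupling of `μ₁, μ₂` compatible with the coordinatewise order, then `ρ` is optimal
for the Monge–Kantorovich problem with the Hamming cost. -/
theorem compatible_coupling_optimal_hypercube (N : ℕ) (μ₁ μ₂ : (Fin N → Bool) → ℝ)
    (h₁ : IsProbF μ₁) (h₂ : IsProbF μ₂)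
    (hdom : ∀ f : (Fin N → Bool) → ℝ, Monotone f →
      ∑ η, f η * μ₁ η ≤ ∑ η, f η * μ₂ η)
    (ρ : (Fin N → Bool) × (Fin N → Bool) → ℝ) (hρ : IsCouplingF μ₁ μ₂ ρ)
    (hcompat : ∀ p : (Fin N → Bool) × (Fin N → Bool), ρ p ≠ 0 → p.1 ≤ p.2) :
    ∀ ρ' : (Fin N → Bool) × (Fin N → Bool) → ℝ, IsCouplingF μ₁ μ₂ ρ' →
      ∑ p : (Fin N → Bool) × (Fin N → Bool), hammingCost p.1 p.2 * ρ p ≤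
        ∑ p : (Fin N → Bool) × (Fin N → Bool), hammingCost p.1 p.2 * ρ' p := by
  
  intro ρ' hρ'
  set f : (Fin N → Bool) → ℝ := fun η => ∑ i, if η i then 1 else 0 with hf
  have key : ∀ (τ : (Fin N → Bool) × (Fin N → Bool) → ℝ), IsCouplingF μ₁ μ₂ τ →
      ∑ p : (Fin N → Bool) × (Fin N → Bool), (f p.2 - f p.1) * τ p =
        ∑ η, f η * μ₂ η - ∑ η, f η * μ₁ η := by
    intro τ hτ
    have : ∑ p : (Fin N → Bool) × (Fin N → Bool), (f p.2 - f p.1) * τ p =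
        (∑ p : (Fin N → Bool) × (Fin N → Bool), f p.2 * τ p) -
          ∑ p : (Fin N → Bool) × (Fin N → Bool), f p.1 * τ p := by
      rw [← Finset.sum_sub_distrib]
      exact Finset.sum_congr rfl (fun p _ => by ring)
    rw [this]
    congr 1
    · rw [Fintype.sum_prod_type, Finset.sum_comm]
      refine Finset.sum_congr rfl fun y _ => ?_
      rw [← hτ.2.2 y, Finset.mul_sum]
    · rw [Fintype.sum_prod_type]
      refine Finset.sum_congr rfl fun x _ => ?_
      rw [← hτ.2.1 x, Finset.mul_sum]
  have h1 : ∑ p : (Fin N → Bool) × (Fin N → Bool), hammingCost p.1 p.2 * ρ p =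
      ∑ p : (Fin N → Bool) × (Fin N → Bool), (f p.2 - f p.1) * ρ p := by
    refine Finset.sum_congr rfl fun p _ => ?_
    by_cases h : ρ p = 0
    · simp [h]
    · have hle := hcompat p h
      congr 1
      unfold hammingCost
      simp only [hf]
      rw [← Finset.sum_sub_distrib]
      refine Finset.sum_congr rfl fun i _ => ?_
      have hi := hle i
      cases h1 : p.1 i <;> cases h2 : p.2 i
      · simp [h1, h2]
      · simp [h1, h2]
      · rw [h1, h2] at hi; exact absurd hi (by simp)
      · simp [h1, h2]
  have h2 : ∑ p : (Fin N → Bool) × (Fin N → Bool), (f p.2 - f p.1) * ρ' p ≤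
      ∑ p : (Fin N → Bool) × (Fin N → Bool), hammingCost p.1 p.2 * ρ' p := by
    refine Finset.sum_le_sum fun p _ => ?_
    refine mul_le_mul_of_nonneg_right ?_ (hρ'.1 p)
    unfold hammingCost
    simp only [hf]
    rw [← Finset.sum_sub_distrib]
    refine Finset.sum_le_sum fun i _ => ?_
    cases h1 : p.1 i <;> cases h2 : p.2 i <;> simp_all
  calc ∑ p : (Fin N → Bool) × (Fin N → Bool), hammingCost p.1 p.2 * ρ p
      = ∑ p : (Fin N → Bool) × (Fin N → Bool), (f p.2 - f p.1) * ρ p := h1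
    _ = ∑ η, f η * μ₂ η - ∑ η, f η * μ₁ η := key ρ hρ
    _ = ∑ p : (Fin N → Bool) × (Fin N → Bool), (f p.2 - f p.1) * ρ' p := (key ρ' hρ').symm
    _ ≤ _ := h2
end
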